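/- Let R be a finite commutative local ring of odd characteristic in which -1 is not a square of a unit, and let z be a unit of R that is not a square of a unit. Then there exist units x and y of R such that z = (1 + x²)·y². -/

import Mathlib

open IsLocalRing Finset

section Aux
variable {R : Type*} [CommRing R] [IsLocalRing R]

lemma aux_two_isUnit (hchar : Odd (ringChar R)) : IsUnit (2 : R) := by
  obtain ⟨m, hm⟩ := hchar
  refine IsUnit.of_mul_eq_one (a := (2 : R)) ((m + 1 : ℕ) : R) ?_
  have h0 : ((ringChar R : ℕ) : R) = 0 := (ringChar.spec R _).mpr dvd_rfl
  have h1 : (2 : R) * ((m + 1 : ℕ) : R) = ((ringChar R : ℕ) : R) + 1 := by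
    rw [hm]; push_cast; ring
  rw [h1, h0, zero_add]

lemma aux_unit_add_mem {u a : R} (hu : IsUnit u) (ha : a ∈ maximalIdeal R) :
    IsUnit (u + a) := by
  by_contra h
  have : u + a ∈ maximalIdeal R := h
  have : u ∈ maximalIdeal R := by
    have := (maximalIdeal R).sub_mem this ha
    simpa using this
  exact this hu

lemma aux_one_add_mem_sq [Fintype R] (h2 : IsUnit (2 : R)) {t : R}
    (ht : t ∈ maximalIdeal R) : ∃ w : R, 1 + t = w ^ 2 := by
  set f : maximalIdeal R → maximalIdeal R := fun u =>
    ⟨2 * u + u * u, (maximalIdeal R).add_mem ((maximalIdeal R).mul_mem_left 2 u.2)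
      ((maximalIdeal R).mul_mem_left _ u.2)⟩ with hf
  have hinj : Function.Injective f := by
    rintro ⟨u, hu⟩ ⟨v, hv⟩ huv
    have h : 2 * u + u * u = 2 * v + v * v := congrArg Subtype.val huv
    have hunit : IsUnit (2 + (u + v)) :=
      aux_unit_add_mem h2 ((maximalIdeal R).add_mem hu hv)
    have hz : (u - v) * (2 + (u + v)) = 0 := by ring_nf; linear_combination h
    have : u - v = 0 := by
      rcases hunit with ⟨c, hc⟩
      have := congrArg (· * (↑c⁻¹ : R)) hz
      simp only [zero_mul, mul_assoc, ← hc, Units.mul_inv, mul_one] at this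
      exact this
    exact Subtype.ext (sub_eq_zero.mp this)
  have hsurj : Function.Surjective f := Finite.surjective_of_injective hinj
  obtain ⟨⟨u, hu⟩, huu⟩ := hsurj ⟨t, ht⟩
  refine ⟨1 + u, ?_⟩
  have : 2 * u + u * u = t := congrArg Subtype.val huu
  linear_combination -this

end Aux

section Main
variable {R : Type*} [CommRing R] [IsLocalRing R] [Fintype R]

set_option linter.unusedSectionVars false

/-- For every unit x, 1 + x² is a unit (given -1 is not a unit square). -/
lemma aux_one_add_sq_isUnit (h2 : IsUnit (2 : R))
    (hm1 : ∀ a : Rˣ, (-1 : R) ≠ (a : R) ^ 2) (x : Rˣ) :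
    IsUnit (1 + (x : R) ^ 2) := by
  by_contra h
  have hmem : 1 + (x : R) ^ 2 ∈ maximalIdeal R := h
  have hmem' : -(1 + (x : R) ^ 2) ∈ maximalIdeal R := (maximalIdeal R).neg_mem hmem
  obtain ⟨w, hw⟩ := aux_one_add_mem_sq h2 hmem'
  have hw' : w ^ 2 = -((x : R) ^ 2) := by linear_combination -hw
  have hwu : IsUnit w := by
    have : IsUnit (w * w) := by
      rw [← sq, hw']
      exact (IsUnit.neg (x.isUnit.pow 2))
    exact isUnit_of_mul_isUnit_left this
  obtain ⟨W, hW⟩ := hwu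
  refine hm1 (W * x⁻¹) ?_
  have : ((W * x⁻¹ : Rˣ) : R) ^ 2 = w ^ 2 * ((x⁻¹ : Rˣ) : R) ^ 2 := by
    rw [Units.val_mul, mul_pow, hW]
  rw [this, hw']
  have hx : (x : R) * ((x⁻¹ : Rˣ) : R) = 1 := x.mul_inv
  have : ((x : R) * ((x⁻¹ : Rˣ) : R)) ^ 2 = 1 := by rw [hx]; ring
  linear_combination this

/-- There is a unit x with 1 + x² not a unit square. -/
lemma aux_exists_nonsquare (h2 : IsUnit (2 : R))
    (hm1 : ∀ a : Rˣ, (-1 : R) ≠ (a : R) ^ 2) :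
    ∃ x : Rˣ, ∀ a : Rˣ, (1 + (x : R) ^ 2) ≠ (a : R) ^ 2 := by
  by_contra h
  push_neg at h
  -- every natural number k+1 is a unit square in R
  have key : ∀ k : ℕ, ∃ a : Rˣ, ((k + 1 : ℕ) : R) = (a : R) ^ 2 := by
    intro k
    induction k with
    | zero => exact ⟨1, by simp⟩
    | succ n ih =>
      obtain ⟨a, ha⟩ := ih
      obtain ⟨b, hb⟩ := h a⁻¹
      refine ⟨a * b, ?_⟩
      have hx : (a : R) * ((a⁻¹ : Rˣ) : R) = 1 := a.mul_inv
      push_cast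
      push_cast at ha
      have hsq : ((a : R) * ((a⁻¹ : Rˣ) : R)) ^ 2 = 1 := by rw [hx]; ring
      linear_combination ha + (a : R) ^ 2 * hb - hsq
  have hc : ringChar R ≠ 0 := CharP.char_ne_zero_of_finite R (ringChar R)
  obtain ⟨a, ha⟩ := key (ringChar R - 1)
  have : ((ringChar R : ℕ) : R) = 0 := (ringChar.spec R _).mpr dvd_rfl
  rw [Nat.sub_add_cancel (Nat.one_le_iff_ne_zero.mpr hc), this] at ha
  exact (a.isUnit.pow 2).ne_zero ha.symm

end Main

section Coset
variable {R : Type*} [CommRing R] [IsLocalRing R] [Fintype R]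
set_option linter.unusedSectionVars false

lemma aux_sq_eq (h2 : IsUnit (2 : R)) {a b : Rˣ} (h : b ^ 2 = a ^ 2) :
    b = a ∨ b = -a := by
  have hR : ((b : R) - a) * ((b : R) + a) = 0 := by
    have := congrArg (Units.val) h
    push_cast at this
    linear_combination this
  have hsum : IsUnit (((b : R) - a) + ((b : R) + a)) := by
    have : ((b : R) - a) + ((b : R) + a) = 2 * b := by ring
    rw [this]
    exact h2.mul b.isUnit
  rcases IsLocalRing.isUnit_or_isUnit_of_isUnit_add hsum with hu | hu
  · right
    have h0 : (b : R) + a = 0 := (hu.mul_right_eq_zero).mp hR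
    refine Units.ext ?_
    show (b : R) = ((-a : Rˣ) : R)
    rw [Units.val_neg]
    linear_combination h0
  · left
    have h0 : (b : R) - a = 0 := by
      rw [mul_comm] at hR
      exact (hu.mul_right_eq_zero).mp hR
    exact Units.ext (by linear_combination h0)

lemma aux_neg_ne (h2 : IsUnit (2 : R)) (a : Rˣ) : a ≠ -a := by
  intro h
  have h1 : (a : R) = ((-a : Rˣ) : R) := congrArg Units.val h
  rw [Units.val_neg] at h1
  have h0 : (2 : R) * a = 0 := by linear_combination h1
  have : IsUnit ((2 : R) * a) := h2.mul a.isUnit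
  rw [h0] at this
  exact not_isUnit_zero this

lemma aux_coset (h2 : IsUnit (2 : R)) (z w : Rˣ)
    (hz : ∀ a : Rˣ, z ≠ a ^ 2) (hw : ∀ a : Rˣ, w ≠ a ^ 2) :
    ∃ y : Rˣ, z = w * y ^ 2 := by
  classical
  set S : Finset Rˣ := Finset.univ.image (fun b : Rˣ => b ^ 2) with hS
  have hfib : ∀ q ∈ S, (Finset.univ.filter (fun b : Rˣ => b ^ 2 = q)).card = 2 := by
    intro q hq
    obtain ⟨a, -, ha⟩ := Finset.mem_image.mp hq
    have heq : Finset.univ.filter (fun b : Rˣ => b ^ 2 = q) = {a, -a} := by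
      ext b
      simp only [Finset.mem_filter, Finset.mem_univ, true_and, Finset.mem_insert,
        Finset.mem_singleton]
      constructor
      · intro hb
        exact aux_sq_eq h2 (by rw [hb, ← ha])
      · rintro (rfl | rfl)
        · exact ha
        · rw [← ha]; exact neg_sq a
    rw [heq, Finset.card_insert_of_notMem (by simpa using aux_neg_ne h2 a),
      Finset.card_singleton]
  have hcard : (Finset.univ : Finset Rˣ).card = 2 * S.card := by
    have h1 := Finset.card_eq_sum_card_image (fun b : Rˣ => b ^ 2) Finset.univ
    rw [Finset.sum_congr rfl hfib, Finset.sum_const, smul_eq_mul, mul_comm] at h1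
    exact h1
  set T : Finset Rˣ := S.image (fun q => w * q) with hT
  have hcardT : T.card = S.card :=
    Finset.card_image_of_injective S (mul_right_injective w)
  have hdisj : Disjoint S T := by
    rw [Finset.disjoint_left]
    intro t htS htT
    obtain ⟨q, hqS, hq⟩ := Finset.mem_image.mp htT
    obtain ⟨b, -, hb⟩ := Finset.mem_image.mp hqS
    obtain ⟨c, -, hc⟩ := Finset.mem_image.mp htS
    refine hw (c * b⁻¹) ?_
    rw [← hb, ← hc] at hq
    have hwe : w = c ^ 2 * (b ^ 2)⁻¹ := eq_mul_inv_iff_mul_eq.mpr hq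
    rw [hwe, mul_pow, inv_pow]
  have huniv : S ∪ T = Finset.univ := by
    apply Finset.eq_univ_of_card
    rw [Finset.card_union_of_disjoint hdisj, hcardT, ← Finset.card_univ, hcard]
    ring
  have hzS : z ∉ S := by
    intro hzS
    obtain ⟨b, -, hb⟩ := Finset.mem_image.mp hzS
    exact hz b hb.symm
  have hzT : z ∈ T := by
    have : z ∈ S ∪ T := huniv ▸ Finset.mem_univ z
    rcases Finset.mem_union.mp this with h | h
    · exact absurd h hzS
    · exact h
  obtain ⟨q, hqS, hq⟩ := Finset.mem_image.mp hzT
  obtain ⟨y, -, hy⟩ := Finset.mem_image.mp hqS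
  exact ⟨y, by rw [← hq, ← hy]⟩

end Coset

/-- Let R be a finite commutative local ring of odd characteristic in which -1 is
not a square of a unit, and let z be a unit of R that is not a square of a unit. Then there exist
units x and y of R such that `z = (1 + x²)·y²`. -/
theorem stmt_5 (R : Type*) [CommRing R] [IsLocalRing R] [Fintype R]
    (hchar : Odd (ringChar R)) (hm1 : ∀ a : Rˣ, (-1 : R) ≠ (a : R) ^ 2)
    (z : Rˣ) (hz : ∀ a : Rˣ, z ≠ a ^ 2) :
    ∃ x y : Rˣ, (z : R) = (1 + (x : R) ^ 2) * (y : R) ^ 2 := by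
  have h2 := aux_two_isUnit (R := R) hchar
  obtain ⟨x, hx⟩ := aux_exists_nonsquare h2 hm1
  obtain ⟨W, hW⟩ := aux_one_add_sq_isUnit h2 hm1 x
  have hWns : ∀ a : Rˣ, W ≠ a ^ 2 := by
    intro a h
    apply hx a
    rw [← hW, h]
    push_cast
    ring
  obtain ⟨y, hy⟩ := aux_coset h2 z W hz hWns
  refine ⟨x, y, ?_⟩
  have hv := congrArg Units.val hy
  push_cast at hv
  rw [hv, hW]
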